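/- Let α = (i/8)·Σ_{j=0}^n a_j (z_j dz̄_j − z̄_j dz_j) restricted to the Brieskorn manifold Σ(a_0,…,a_n) = S^{2n+1} ∩ f^{-1}(0), f(z) = Σ z_j^{a_j}. Then the vector field R = 4i(z_0/a_0, …, z_n/a_n) is tangent to Σ(a_0,…,a_n), satisfies α(R) = 1, and ι_R dα = 0; hence R is the Reeb vector field of α. -/

import Mathlib

open Complex

/-- On the Brieskorn manifold `Σ(a_0,…,a_n) = S^{2n+1} ∩ f⁻¹(0)`, the vector field
`R = 4i(z_0/a_0,…,z_n/a_n)` is tangent to both the sphere and `f⁻¹(0)`, satisfies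
`α(R) = 1` for `α = (i/8)·Σ a_j (z_j dz̄_j − z̄_j dz_j)` (whose value on a tangent
vector `v` is `(1/4)·Σ a_j Im(z̄_j v_j)`), and contracts to zero in
`dα = (i/4)·Σ a_j dz_j ∧ dz̄_j` (whose value on `(u,v)` is `(1/2)·Σ a_j Im(ū_j v_j)`).
Hence `R` is the Reeb vector field of `α`. -/
theorem stmt1 (n : ℕ) (a : Fin (n + 1) → ℕ) (ha : ∀ j, 0 < a j)
    (z : Fin (n + 1) → ℂ)
    (hsphere : ∑ j, ‖z j‖ ^ 2 = 1)
    (hf : ∑ j, z j ^ a j = 0) :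
    let R : Fin (n + 1) → ℂ := fun j => 4 * Complex.I * z j / (a j : ℂ)
    let alpha : (Fin (n + 1) → ℂ) → ℝ :=
      fun v => (1 / 4) * ∑ j, (a j : ℝ) * ((starRingEnd ℂ) (z j) * v j).im
    let dalpha : (Fin (n + 1) → ℂ) → (Fin (n + 1) → ℂ) → ℝ :=
      fun u v => (1 / 2) * ∑ j, (a j : ℝ) * ((starRingEnd ℂ) (u j) * v j).im
    -- R is tangent to the sphere at z:
    ((∑ j, (starRingEnd ℂ) (z j) * R j).re = 0) ∧
    -- R is tangent to f⁻¹(0) at z (kernel of df):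
    (∑ j, (a j : ℂ) * z j ^ (a j - 1) * R j = 0) ∧
    -- α(R) = 1:
    alpha R = 1 ∧
    -- ι_R dα = 0 on the tangent space of Σ(a_0,…,a_n) at z:
    (∀ v : Fin (n + 1) → ℂ,
      (∑ j, (starRingEnd ℂ) (z j) * v j).re = 0 →
      (∑ j, (a j : ℂ) * z j ^ (a j - 1) * v j = 0) →
      dalpha R v = 0) := by
  intro R alpha dalpha
  have hc : ∀ j, (a j : ℂ) ≠ 0 := fun j => Nat.cast_ne_zero.2 (ha j).ne'
  have hr : ∀ j, (a j : ℝ) ≠ 0 := fun j => Nat.cast_ne_zero.2 (ha j).ne'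
  have hz : ∀ j, z j ^ (a j - 1) * z j = z j ^ a j := by
    intro j
    rw [← pow_succ, Nat.sub_add_cancel (ha j)]
  refine ⟨?_, ?_, ?_, ?_⟩
  · rw [Complex.re_sum]
    apply Finset.sum_eq_zero
    intro j _
    simp only [R]
    simp [Complex.div_re, Complex.div_im, Complex.mul_re, Complex.mul_im, Complex.normSq_apply]
    ring
  · have : ∀ j ∈ Finset.univ, (a j : ℂ) * z j ^ (a j - 1) * R j = 4 * Complex.I * z j ^ a j := by
      intro j _
      simp only [R]
      field_simp [hc j]
      linear_combination hz j
    rw [Finset.sum_congr rfl this, ← Finset.mul_sum, hf, mul_zero]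
  · simp only [alpha, R]
    have : ∀ j ∈ Finset.univ, (a j : ℝ) * ((starRingEnd ℂ) (z j) * (4 * Complex.I * z j / (a j : ℂ))).im = 4 * ‖z j‖ ^ 2 := by
      intro j _
      rw [Complex.sq_norm]
      simp [Complex.div_re, Complex.div_im, Complex.mul_re, Complex.mul_im, Complex.normSq_apply]
      field_simp [hr j]
    rw [Finset.sum_congr rfl this, ← Finset.mul_sum, hsphere]
    norm_num
  · intro v hv1 _
    simp only [dalpha, R]
    have : ∀ j ∈ Finset.univ, (a j : ℝ) * ((starRingEnd ℂ) (4 * Complex.I * z j / (a j : ℂ)) * v j).im = -4 * ((starRingEnd ℂ) (z j) * v j).re := by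
      intro j _
      simp [Complex.div_re, Complex.div_im, Complex.mul_re, Complex.mul_im, Complex.normSq_apply]
      field_simp [hr j]
      ring
    rw [Finset.sum_congr rfl this, ← Finset.mul_sum, ← Complex.re_sum, hv1]
    norm_num
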